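/- Fix p ∈ (0,1) and set k_n = ⌈2 ln n / p⌉. Then the probability, under G(n,p), of the event that every vertex subset A ⊆ Fin n satisfies |𝒩(A)| ≤ 2 · ∑_{i=0}^{k_n} C(n,i) tends to 1 as n → ∞. In particular, there is a constant c > 0 such that almost surely every cut {A, Ā} of G(n,p) satisfies cut-bool(A) ≤ c · (ln n)² / p, so every decomposition tree of G(n,p) almost surely has boolean-width O((ln n)²/p). -/

import Mathlib

open Finset MeasureTheory Filter
open scoped ENNReal Nat

/-- The simple graph on `Fin n` determined by an indicator of edges,
a function from 2-element subsets (unordered pairs) of `Fin n` to `Bool`. -/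
def graphOf {n : ℕ} (f : Sym2 (Fin n) → Bool) : SimpleGraph (Fin n) where
  Adj v w := v ≠ w ∧ f s(v, w) = true
  symm := ⟨fun v w ⟨h, hf⟩ => ⟨h.symm, by rwa [Sym2.eq_swap]⟩⟩
  loopless := ⟨fun v ⟨h, _⟩ => h rfl⟩

instance {n : ℕ} (f : Sym2 (Fin n) → Bool) : DecidableRel (graphOf f).Adj :=
  fun v w => inferInstanceAs (Decidable (v ≠ w ∧ f s(v, w) = true))

/-- The Erdős–Rényi random graph `G(n,p)`: product Bernoulli(p) measure on
edge-indicator functions. -/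
noncomputable def gnp (n : ℕ) (p : ℝ) (hp : p ≤ 1) :
    Measure (Sym2 (Fin n) → Bool) :=
  Measure.pi fun _ =>
    (PMF.bernoulli (Real.toNNReal p) (Real.toNNReal_le_one.mpr hp)).toMeasure

/-- The external neighborhood `N(X)`: vertices outside `X` adjacent to some vertex of `X`. -/
noncomputable def extNbhd {V : Type*} [Fintype V] (G : SimpleGraph V) (X : Finset V) :
    Finset V := by
  classical exact Finset.univ.filter fun v => v ∉ X ∧ ∃ x ∈ X, G.Adj x v

/-- The neighborhood family of the cut `{A, Ā}`: the sets `N(X) ∩ Ā` for `X ⊆ A`. -/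
noncomputable def nbhdFamily {V : Type*} [Fintype V] [DecidableEq V] (G : SimpleGraph V)
    (A : Finset V) : Finset (Finset V) :=
  A.powerset.image fun X => extNbhd G X ∩ Aᶜ

/- ### auxiliary lemmas -/

lemma gnp_isProb {n : ℕ} {p : ℝ} (hp : p ≤ 1) : IsProbabilityMeasure (gnp n p hp) := by
  unfold gnp; infer_instance

lemma mem_extNbhd {V : Type*} [Fintype V] {G : SimpleGraph V} {X : Finset V} {v : V} :
    v ∈ extNbhd G X ↔ v ∉ X ∧ ∃ x ∈ X, G.Adj x v := by
  classical
  simp [extNbhd]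

lemma one_le_card_nbhdFamily {V : Type*} [Fintype V] [DecidableEq V] (G : SimpleGraph V)
    (A : Finset V) : 1 ≤ (nbhdFamily G A).card :=
  Finset.Nonempty.card_pos
    ⟨_, Finset.mem_image_of_mem _ (Finset.mem_powerset.mpr (Finset.empty_subset A))⟩

lemma count_small_subsets {n k : ℕ} (B : Finset (Fin n)) :
    (B.powerset.filter fun X => X.card ≤ k).card ≤ ∑ i ∈ Finset.range (k+1), n.choose i := by
  classical
  have hsub : (B.powerset.filter fun X => X.card ≤ k) ⊆
      (Finset.range (k+1)).biUnion (fun i => B.powersetCard i) := by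
    intro X hX
    simp only [mem_filter, mem_powerset] at hX
    simp only [mem_biUnion, Finset.mem_range, mem_powersetCard]
    exact ⟨X.card, Nat.lt_succ_of_le hX.2, hX.1, rfl⟩
  calc (B.powerset.filter fun X => X.card ≤ k).card
      ≤ ((Finset.range (k+1)).biUnion (fun i => B.powersetCard i)).card := card_le_card hsub
    _ ≤ ∑ i ∈ Finset.range (k+1), (B.powersetCard i).card := card_biUnion_le
    _ ≤ ∑ i ∈ Finset.range (k+1), n.choose i := by
        refine Finset.sum_le_sum fun i _ => ?_
        rw [card_powersetCard]
        exact Nat.choose_le_choose i (by simpa using card_le_card (subset_univ B))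

/-- The key deterministic combinatorial lemma. -/
lemma comb_lemma {n k : ℕ} (G : SimpleGraph (Fin n)) [DecidableRel G.Adj]
    (h : ∀ X Y : Finset (Fin n), X.card = k → Y.card = k → Disjoint X Y →
        ∃ x ∈ X, ∃ y ∈ Y, G.Adj x y) (A : Finset (Fin n)) :
    (nbhdFamily G A).card ≤ 2 * ∑ i ∈ Finset.range (k+1), n.choose i := by
  classical
  set F₁ := (A.powerset.filter fun X => X.card ≤ k).image fun X => extNbhd G X ∩ Aᶜ
  set F₂ := ((univ : Finset (Fin n)).powerset.filter fun Z => Z.card ≤ k).image fun Z => Aᶜ \ Z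
  have hsub : nbhdFamily G A ⊆ F₁ ∪ F₂ := by
    intro s hs
    rw [nbhdFamily, Finset.mem_image] at hs
    obtain ⟨X, hXA, rfl⟩ := hs
    rw [mem_powerset] at hXA
    by_cases hcard : X.card ≤ k
    · apply Finset.mem_union_left
      exact Finset.mem_image_of_mem _ (by simp [mem_filter, mem_powerset, hXA, hcard])
    · apply Finset.mem_union_right
      push_neg at hcard
      set Z := Aᶜ \ extNbhd G X with hZ
      have hZcard : Z.card ≤ k := by
        by_contra hk
        push_neg at hk
        obtain ⟨Y, hYZ, hYcard⟩ := Finset.exists_subset_card_eq hk.le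
        obtain ⟨X', hX'X, hX'card⟩ := Finset.exists_subset_card_eq hcard.le
        have hdisj : Disjoint X' Y := by
          refine Finset.disjoint_left.mpr fun a haX' haY => ?_
          have haA : a ∈ A := hXA (hX'X haX')
          have : a ∈ Aᶜ := (Finset.sdiff_subset (hYZ haY) : _)
          simp only [Finset.mem_compl] at this
          exact this haA
        obtain ⟨x, hx, y, hy, hadj⟩ := h X' Y hX'card hYcard hdisj
        have hyZ := hYZ hy
        rw [hZ, Finset.mem_sdiff] at hyZ
        apply hyZ.2
        rw [mem_extNbhd]
        constructor
        · intro hyX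
          have : y ∈ Aᶜ := hyZ.1
          rw [Finset.mem_compl] at this
          exact this (hXA hyX)
        · exact ⟨x, hX'X hx, hadj⟩
      have hrepr : extNbhd G X ∩ Aᶜ = Aᶜ \ Z := by
        rw [hZ]
        ext v
        simp only [Finset.mem_inter, Finset.mem_sdiff]
        tauto
      rw [hrepr]
      exact Finset.mem_image_of_mem _ (by simp [mem_filter, mem_powerset, hZcard])
  calc (nbhdFamily G A).card ≤ (F₁ ∪ F₂).card := card_le_card hsub
    _ ≤ F₁.card + F₂.card := card_union_le _ _
    _ ≤ (∑ i ∈ Finset.range (k+1), n.choose i) + (∑ i ∈ Finset.range (k+1), n.choose i) := by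
        gcongr
        · exact le_trans (card_image_le) (count_small_subsets A)
        · exact le_trans (card_image_le) (count_small_subsets univ)
    _ = 2 * ∑ i ∈ Finset.range (k+1), n.choose i := (two_mul _).symm

lemma gnp_cylinder {n : ℕ} {p : ℝ} (hp0 : 0 ≤ p) (hp : p ≤ 1) (E : Finset (Sym2 (Fin n))) :
    gnp n p hp {f | ∀ e ∈ E, f e = false} = (ENNReal.ofReal (1 - p)) ^ E.card := by
  classical
  have hset : {f : Sym2 (Fin n) → Bool | ∀ e ∈ E, f e = false} =
      Set.pi Set.univ (fun e => if e ∈ E then ({false} : Set Bool) else Set.univ) := by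
    ext f
    simp only [Set.mem_setOf_eq, Set.mem_pi, Set.mem_univ, forall_true_left]
    constructor
    · intro h e
      by_cases he : e ∈ E <;> simp [he, h]
    · intro h e he
      have := h e
      simpa [he] using this
  rw [gnp, hset, Measure.pi_pi]
  have hμ : ∀ e : Sym2 (Fin n),
      (PMF.bernoulli (Real.toNNReal p) (Real.toNNReal_le_one.mpr hp)).toMeasure
        (if e ∈ E then ({false} : Set Bool) else Set.univ)
      = if e ∈ E then ENNReal.ofReal (1 - p) else 1 := by
    intro e
    by_cases he : e ∈ E
    · simp only [he, if_true]
      rw [PMF.toMeasure_apply_singleton _ _ (measurableSet_singleton _)]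
      rw [PMF.bernoulli_apply, cond_false, ENNReal.ofReal, NNReal.sub_def, NNReal.coe_one, Real.coe_toNNReal _ hp0]
    · simp only [he, if_false]; exact measure_univ
  simp_rw [hμ]
  rw [Finset.prod_ite_mem, Finset.univ_inter, Finset.prod_const]

/-- the "good" property: every two disjoint `k`-sets are joined by an edge. -/
def goodProp {n : ℕ} (k : ℕ) (f : Sym2 (Fin n) → Bool) : Prop :=
  ∀ X Y : Finset (Fin n), X.card = k → Y.card = k → Disjoint X Y →
    ∃ x ∈ X, ∃ y ∈ Y, (graphOf f).Adj x y

lemma bad_measure_le {p : ℝ} (hp0 : 0 < p) (hp1 : p < 1) (n k : ℕ) :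
    gnp n p hp1.le {f | ¬ goodProp k f} ≤
      ENNReal.ofReal (((n.choose k : ℝ))^2 * (1-p)^(k*k)) := by
  classical
  set q : ℝ≥0∞ := ENNReal.ofReal (1 - p) with hq
  set S : Finset (Finset (Fin n) × Finset (Fin n)) :=
    ((univ.powersetCard k) ×ˢ (univ.powersetCard k)).filter fun XY => Disjoint XY.1 XY.2 with hS
  set E : Finset (Fin n) × Finset (Fin n) → Finset (Sym2 (Fin n)) :=
    fun XY => (XY.1 ×ˢ XY.2).image fun xy => s(xy.1, xy.2) with hE
  have hsub : {f : Sym2 (Fin n) → Bool | ¬ goodProp k f} ⊆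
      ⋃ XY ∈ S, {f : Sym2 (Fin n) → Bool | ∀ e ∈ E XY, f e = false} := by
    intro f hf
    simp only [goodProp, Set.mem_setOf_eq, not_forall] at hf
    obtain ⟨X, Y, hX, hY, hdisj, hno⟩ := hf
    push_neg at hno
    refine Set.mem_iUnion₂.mpr ⟨(X, Y), ?_, ?_⟩
    · simp only [hS, mem_filter, Finset.mem_product, mem_powersetCard]
      exact ⟨⟨⟨subset_univ X, hX⟩, subset_univ Y, hY⟩, hdisj⟩
    · intro e he
      simp only [hE, Finset.mem_image, Finset.mem_product, Prod.exists] at he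
      obtain ⟨x, y, ⟨hx, hy⟩, rfl⟩ := he
      have hxy : x ≠ y := fun h => (Finset.disjoint_left.mp hdisj hx (h ▸ hy))
      have hna := hno x hx y hy
      have : ¬ (x ≠ y ∧ f s(x, y) = true) := hna
      simp only [hxy, ne_eq, not_false_eq_true, true_and, Bool.not_eq_true] at this
      exact this
  have hcylcard : ∀ XY ∈ S, (E XY).card = k * k := by
    intro XY hXY
    simp only [hS, mem_filter, Finset.mem_product, mem_powersetCard] at hXY
    obtain ⟨⟨⟨-, hX⟩, -, hY⟩, hdisj⟩ := hXY
    rw [hE]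
    rw [Finset.card_image_of_injOn, Finset.card_product, hX, hY]
    rintro ⟨a, b⟩ hab ⟨c, d⟩ hcd habcd
    simp only [Finset.mem_coe, Finset.mem_product] at hab hcd
    rw [Sym2.eq_iff] at habcd
    rcases habcd with ⟨rfl, rfl⟩ | ⟨rfl, rfl⟩
    · rfl
    · exact absurd hab.1 (fun h => Finset.disjoint_left.mp hdisj h hcd.2)
  calc gnp n p hp1.le {f | ¬ goodProp k f}
      ≤ gnp n p hp1.le (⋃ XY ∈ S, {f : Sym2 (Fin n) → Bool | ∀ e ∈ E XY, f e = false}) :=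
        measure_mono hsub
    _ ≤ ∑ XY ∈ S, gnp n p hp1.le {f : Sym2 (Fin n) → Bool | ∀ e ∈ E XY, f e = false} :=
        measure_biUnion_finset_le _ _
    _ = ∑ XY ∈ S, q ^ (k * k) := by
        refine Finset.sum_congr rfl fun XY hXY => ?_
        rw [gnp_cylinder hp0.le hp1.le, hcylcard XY hXY]
    _ = (S.card : ℝ≥0∞) * q ^ (k * k) := by rw [Finset.sum_const, nsmul_eq_mul]
    _ ≤ ((n.choose k : ℝ≥0∞))^2 * q ^ (k * k) := by
        gcongr
        have h1 : S.card ≤ (n.choose k) * (n.choose k) := by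
          calc S.card ≤ ((univ.powersetCard k (α := Fin n)) ×ˢ (univ.powersetCard k)).card :=
              card_le_card (filter_subset _ _)
            _ = (n.choose k) * (n.choose k) := by
                rw [Finset.card_product, card_powersetCard, card_univ, Fintype.card_fin]
        have := (Nat.cast_le (α := ℝ≥0∞)).mpr h1
        push_cast at this ⊢
        calc (S.card : ℝ≥0∞) ≤ (n.choose k : ℝ≥0∞) * (n.choose k) := this
          _ = (n.choose k : ℝ≥0∞)^2 := (sq _).symm
    _ = ENNReal.ofReal (((n.choose k : ℝ))^2 * (1-p)^(k*k)) := by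
        rw [ENNReal.ofReal_mul (by positivity), ENNReal.ofReal_pow (by positivity),
          ENNReal.ofReal_pow (by linarith), ENNReal.ofReal_natCast]

lemma real_bound {p : ℝ} (hp0 : 0 < p) (hp1 : p < 1) (n : ℕ) (hn : 1 ≤ n) :
    ((n.choose ⌈2 * Real.log n / p⌉₊ : ℝ))^2 * (1-p)^(⌈2 * Real.log n / p⌉₊ * ⌈2 * Real.log n / p⌉₊)
      ≤ (((⌈2 * Real.log n / p⌉₊)! : ℝ))⁻¹ ^ 2 := by
  set k : ℕ := ⌈2 * Real.log n / p⌉₊ with hk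
  have hL : 0 ≤ Real.log n := Real.log_natCast_nonneg n
  have hkge : 2 * Real.log n / p ≤ (k : ℝ) := Nat.le_ceil _
  have hfac : (0:ℝ) < (k)! := by positivity
  have hC : (n.choose k : ℝ) * (k)! ≤ (n:ℝ)^k := by
    have := Nat.choose_le_pow_div (α := ℝ) k n
    rw [le_div_iff₀ hfac] at this
    exact this
  have hq : (1 - p)^(k*k) ≤ Real.exp (-(p * (k*k))) := by
    have h1 : 1 - p ≤ Real.exp (-p) := by
      have := Real.add_one_le_exp (-p)
      linarith
    calc (1-p)^(k*k) ≤ (Real.exp (-p))^(k*k) := by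
          apply pow_le_pow_left₀ (by linarith) h1
      _ = Real.exp (-(p * (k*k))) := by
          rw [← Real.exp_nat_mul]; congr 1; push_cast; ring
  have hnk : ((n:ℝ)^k)^2 * Real.exp (-(p * (k*k))) ≤ 1 := by
    have hexp : (n:ℝ)^k = Real.exp (k * Real.log n) := by
      rw [← Real.exp_log (x := (n:ℝ)) (by exact_mod_cast hn), ← Real.exp_nat_mul]
      rw [Real.log_exp]
    rw [hexp, ← Real.exp_nat_mul, ← Real.exp_add]
    rw [Real.exp_le_one_iff]
    have hpk : 2 * Real.log n ≤ p * k := by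
      rw [div_le_iff₀ hp0] at hkge
      linarith [hkge]
    have : (k:ℝ) * (2 * Real.log n) ≤ (k:ℝ) * (p * k) := by
      apply mul_le_mul_of_nonneg_left hpk (Nat.cast_nonneg k)
    push_cast
    nlinarith [this]
  have key : ((n.choose k : ℝ) * (k)!)^2 * (1-p)^(k*k) ≤ 1 := by
    have h2 : ((n.choose k : ℝ) * (k)!)^2 ≤ ((n:ℝ)^k)^2 := by
      apply pow_le_pow_left₀ (by positivity) hC
    calc ((n.choose k : ℝ) * (k)!)^2 * (1-p)^(k*k)
        ≤ ((n:ℝ)^k)^2 * Real.exp (-(p * (k*k))) := by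
          apply mul_le_mul h2 hq (pow_nonneg (by linarith) _) (by positivity)
      _ ≤ 1 := hnk
  rw [inv_pow, ← one_div, le_div_iff₀ (by positivity)]
  nlinarith [key]

lemma logb_numeric {p : ℝ} (hp0 : 0 < p) (hp1 : p < 1) (n : ℕ) (hn : 3 ≤ n)
    (m : ℕ) (hm : 1 ≤ m)
    (hmle : m ≤ 2 * ∑ i ∈ Finset.range (⌈2 * Real.log n / p⌉₊ + 1), n.choose i) :
    Real.logb 2 m ≤ 20 * (Real.log n) ^ 2 / p := by
  set k : ℕ := ⌈2 * Real.log n / p⌉₊ with hk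
  set L : ℝ := Real.log n with hLdef
  have hL : 1 ≤ L := by
    rw [hLdef]
    rw [show (1:ℝ) = Real.log (Real.exp 1) from (Real.log_exp 1).symm]
    apply Real.log_le_log (Real.exp_pos 1)
    calc Real.exp 1 ≤ 2.7182818286 := Real.exp_one_lt_d9.le
      _ ≤ (n : ℝ) := by
        have : (3:ℝ) ≤ (n:ℝ) := by exact_mod_cast hn
        linarith
  have hkub : (k : ℝ) ≤ 2 * L / p + 1 := by
    rw [hk]
    exact (Nat.ceil_lt_add_one (by positivity)).le
  -- bound the sum
  have hsum : (2 * ∑ i ∈ Finset.range (k + 1), n.choose i : ℝ) ≤ 2 * (k+1) * (n:ℝ)^k := by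
    have : ∑ i ∈ Finset.range (k + 1), (n.choose i : ℝ) ≤ ∑ i ∈ Finset.range (k+1), (n:ℝ)^k := by
      apply Finset.sum_le_sum
      intro i hi
      rw [Finset.mem_range] at hi
      calc (n.choose i : ℝ) ≤ (n:ℝ)^i := by exact_mod_cast Nat.choose_le_pow n i
        _ ≤ (n:ℝ)^k := by
          apply pow_le_pow_right₀ (by exact_mod_cast hn.trans' (by norm_num) : (1:ℝ) ≤ n)
          omega
    rw [Finset.sum_const, Finset.card_range, nsmul_eq_mul] at this
    push_cast
    push_cast at this
    nlinarith [this]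
  have hMpos : (0:ℝ) < 2 * (k+1) * (n:ℝ)^k := by positivity
  have hlogm : Real.log m ≤ Real.log (2 * (k+1) * (n:ℝ)^k) := by
    apply Real.log_le_log (by exact_mod_cast hm)
    calc (m:ℝ) ≤ (2 * ∑ i ∈ Finset.range (k + 1), n.choose i : ℝ) := by exact_mod_cast hmle
      _ ≤ _ := hsum
  have hlogM : Real.log (2 * (k+1) * (n:ℝ)^k) ≤ 1 + ((k:ℝ)+1) + k * L := by
    rw [Real.log_mul (by positivity) (by positivity), Real.log_mul (by norm_num) (by positivity),
      Real.log_pow]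
    have h2 : Real.log 2 ≤ 1 := by
      calc Real.log 2 ≤ 2 - 1 := Real.log_le_sub_one_of_pos (by norm_num)
        _ = 1 := by norm_num
    have h3 : Real.log ((k:ℝ)+1) ≤ (k:ℝ) + 1 := by
      calc Real.log ((k:ℝ)+1) ≤ ((k:ℝ)+1) - 1 := Real.log_le_sub_one_of_pos (by positivity)
        _ ≤ (k:ℝ) + 1 := by linarith
    rw [hLdef]
    push_cast
    nlinarith [h2, h3]
  have hlog2 : (0.6931471803 : ℝ) < Real.log 2 := Real.log_two_gt_d9
  have hX : Real.log m ≤ 1 + ((k:ℝ)+1) + (k:ℝ) * L := hlogm.trans hlogM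
  have hfinal : Real.logb 2 m ≤ (1 + ((k:ℝ)+1) + (k:ℝ)*L) / Real.log 2 := by
    rw [Real.logb]
    exact (div_le_div_iff_of_pos_right (by linarith)).mpr hX
  refine hfinal.trans ?_
  rw [div_le_div_iff₀ (by linarith) hp0]
  have h2Lp : (2*L/p)*p = 2*L := div_mul_cancel₀ _ hp0.ne'
  have hkp : (k:ℝ) * p ≤ 2*L + p := by
    nlinarith [mul_le_mul_of_nonneg_right hkub hp0.le, h2Lp]
  have hLnn : (0:ℝ) ≤ L := by linarith
  have hkpL : (k:ℝ) * p * L ≤ (2*L + p) * L := mul_le_mul_of_nonneg_right hkp hLnn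
  nlinarith [hkp, hkpL, hL, hp0.le, hp1.le, hlog2, sq_nonneg (L-1), sq_nonneg L]

/-- for fixed `p ∈ (0,1)` and `k_n = ⌈2 ln n / p⌉`, asymptotically almost
surely every cut `{A, Ā}` of `G(n,p)` satisfies `|𝒩(A)| ≤ 2 · ∑_{i=0}^{k_n} C(n,i)`;
in particular there is a constant `c > 0` such that asymptotically almost surely every cut
satisfies `cut-bool(A) ≤ c (ln n)² / p` (so every decomposition tree of `G(n,p)` almost
surely has boolean-width `O((ln n)²/p)`). -/
theorem gnp_all_cuts_small_boolwidth (p : ℝ) (hp0 : 0 < p) (hp1 : p < 1) :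
    Tendsto
      (fun n : ℕ =>
        gnp n p hp1.le
          {f | ∀ A : Finset (Fin n),
            (nbhdFamily (graphOf f) A).card ≤
              2 * ∑ i ∈ Finset.range (⌈2 * Real.log n / p⌉₊ + 1), n.choose i})
      atTop (nhds (1 : ℝ≥0∞)) ∧
    ∃ c : ℝ, 0 < c ∧
      Tendsto
        (fun n : ℕ =>
          gnp n p hp1.le
            {f | ∀ A : Finset (Fin n),
              Real.logb 2 ((nbhdFamily (graphOf f) A).card) ≤ c * (Real.log n) ^ 2 / p})
        atTop (nhds (1 : ℝ≥0∞)) := by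

  classical
  set k : ℕ → ℕ := fun n => ⌈2 * Real.log n / p⌉₊ with hkdef
  set bound : ℕ → ℝ := fun n => ((n.choose (k n) : ℝ))^2 * (1-p)^(k n * k n) with hbdef
  set E₁ : ∀ n : ℕ, Set (Sym2 (Fin n) → Bool) := fun n =>
    {f | ∀ A : Finset (Fin n),
        (nbhdFamily (graphOf f) A).card ≤
          2 * ∑ i ∈ Finset.range (k n + 1), n.choose i} with hE₁def
  have hktends : Tendsto (fun n : ℕ => k n) atTop atTop := by
    apply tendsto_nat_ceil_atTop.comp
    have h1 : Tendsto (fun n : ℕ => Real.log n) atTop atTop :=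
      Real.tendsto_log_atTop.comp tendsto_natCast_atTop_atTop
    exact (h1.const_mul_atTop (by norm_num : (0:ℝ) < 2)).atTop_div_const hp0
  -- bound tends to 0
  have hbound0 : Tendsto bound atTop (nhds 0) := by
    apply tendsto_of_tendsto_of_tendsto_of_le_of_le'
      (g := fun _ => (0:ℝ)) (h := fun n => ((k n : ℝ))⁻¹) tendsto_const_nhds
    · exact tendsto_inv_atTop_zero.comp (tendsto_natCast_atTop_atTop.comp hktends)
    · filter_upwards [eventually_ge_atTop 1] with n hn
      have := pow_nonneg (by nlinarith [hp1] : (0:ℝ) ≤ 1 - p) (k n * k n)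
      positivity
    · filter_upwards [eventually_ge_atTop 1, hktends.eventually (eventually_ge_atTop 1)]
        with n hn hkn
      have h1 := real_bound hp0 hp1 n hn
      refine h1.trans ?_
      have hkk : (1:ℝ) ≤ ((k n)! : ℝ) := by exact_mod_cast Nat.factorial_pos (k n)
      have hkle : (k n : ℝ) ≤ ((k n)! : ℝ) := by exact_mod_cast Nat.self_le_factorial _
      have hkpos : (0:ℝ) < (k n : ℝ) := by exact_mod_cast hkn
      rw [inv_pow]
      rw [inv_le_inv₀ (by positivity) hkpos]
      calc (k n : ℝ) ≤ ((k n)! : ℝ) := hkle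
        _ ≤ ((k n)! : ℝ)^2 := by nlinarith [hkk]
  have hOf : Tendsto (fun n => ENNReal.ofReal (bound n)) atTop (nhds 0) := by
    have := ENNReal.tendsto_ofReal hbound0
    simpa using this
  -- lower bound on the measure of E₁
  have hlower : ∀ n, 1 - ENNReal.ofReal (bound n) ≤ gnp n p hp1.le (E₁ n) := by
    intro n
    haveI := gnp_isProb (n := n) hp1.le
    have hgoodsub : {f : Sym2 (Fin n) → Bool | goodProp (k n) f} ⊆ E₁ n := by
      intro f hf
      exact fun A => comb_lemma (graphOf f) hf A
    have hcover : (1:ℝ≥0∞) ≤ gnp n p hp1.le {f | goodProp (k n) f}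
        + gnp n p hp1.le {f | ¬ goodProp (k n) f} := by
      have : (Set.univ : Set (Sym2 (Fin n) → Bool)) ⊆
          {f | goodProp (k n) f} ∪ {f | ¬ goodProp (k n) f} := by
        intro f _
        by_cases h : goodProp (k n) f
        · exact Or.inl h
        · exact Or.inr h
      calc (1:ℝ≥0∞) = gnp n p hp1.le Set.univ := measure_univ.symm
        _ ≤ gnp n p hp1.le ({f | goodProp (k n) f} ∪ {f | ¬ goodProp (k n) f}) :=
            measure_mono this
        _ ≤ _ := measure_union_le _ _
    have hbad := bad_measure_le hp0 hp1 n (k n)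
    rw [tsub_le_iff_right]
    calc (1:ℝ≥0∞) ≤ gnp n p hp1.le {f | goodProp (k n) f}
          + gnp n p hp1.le {f | ¬ goodProp (k n) f} := hcover
      _ ≤ gnp n p hp1.le (E₁ n) + ENNReal.ofReal (bound n) := by
          exact add_le_add (measure_mono hgoodsub) hbad
  have hupper : ∀ n, gnp n p hp1.le (E₁ n) ≤ 1 := by
    intro n
    haveI := gnp_isProb (n := n) hp1.le
    exact prob_le_one
  have part1 : Tendsto (fun n : ℕ => gnp n p hp1.le (E₁ n)) atTop (nhds 1) := by
    apply tendsto_of_tendsto_of_tendsto_of_le_of_le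
      (g := fun n => 1 - ENNReal.ofReal (bound n)) (h := fun _ => (1:ℝ≥0∞)) ?_
      tendsto_const_nhds hlower hupper
    have := ENNReal.Tendsto.sub (tendsto_const_nhds (x := (1:ℝ≥0∞))) hOf
      (Or.inl ENNReal.one_ne_top)
    simpa using this
  refine ⟨part1, 20, by norm_num, ?_⟩
  apply tendsto_of_tendsto_of_tendsto_of_le_of_le'
    (g := fun n : ℕ => gnp n p hp1.le (E₁ n)) (h := fun _ => (1:ℝ≥0∞)) part1
    tendsto_const_nhds
  · filter_upwards [eventually_ge_atTop 3] with n hn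
    apply measure_mono
    intro f hf
    intro A
    have hcard := hf A
    have hm1 : 1 ≤ (nbhdFamily (graphOf f) A).card := one_le_card_nbhdFamily _ _
    exact logb_numeric hp0 hp1 n hn _ hm1 hcard
  · filter_upwards with n
    haveI := gnp_isProb (n := n) hp1.le
    exact prob_le_one
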